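/- In the quantum plane $A = \mathbb{C}\langle x,y \rangle / (yx - qxy)$ with $q$ not a root of unity, any algebra-like ribbon automorphism determined by $\sigma(x) = \lambda x$, $\sigma(y) = \lambda y$ and the ribbon relation satisfies $\sigma(x^m y^n) = \lambda^{m+n} q^{(m+n)(m+n-1)/2} x^m y^n$ for all $m, n \geq 0$. -/

import Mathlib

open TensorProduct

noncomputable section
namespace S7Aux

variable {A : Type*} [Ring A] [Algebra ℂ A]

/-- Monomials of total degree `d`. -/
def Mon (x y : A) (d : ℕ) : Set A := {a | ∃ m n : ℕ, m + n = d ∧ a = x ^ m * y ^ n}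

/-- Span of `Mon i ⊗ Mon j`. -/
def S (x y : A) (i j : ℕ) : Submodule ℂ (A ⊗[ℂ] A) :=
  Submodule.span ℂ {t | ∃ a ∈ Mon x y i, ∃ b ∈ Mon x y j, t = a ⊗ₜ[ℂ] b}

lemma tmul_mem {x y a b : A} {i j : ℕ} (ha : a ∈ Mon x y i) (hb : b ∈ Mon x y j) :
    a ⊗ₜ[ℂ] b ∈ S x y i j := Submodule.subset_span ⟨a, ha, b, hb, rfl⟩

lemma spanMem {x y : A} {i j : ℕ} {N : Type*} [AddCommGroup N] [Module ℂ N]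
    (f : A ⊗[ℂ] A →ₗ[ℂ] N) (p : Submodule ℂ N)
    (h : ∀ a ∈ Mon x y i, ∀ b ∈ Mon x y j, f (a ⊗ₜ b) ∈ p) :
    ∀ t ∈ S x y i j, f t ∈ p := by
  intro t ht
  have h2 : S x y i j ≤ p.comap f := by
    apply Submodule.span_le.mpr
    rintro _ ⟨a, ha, b, hb, rfl⟩
    exact h a ha b hb
  exact h2 ht

lemma spanPred {x y : A} {i j : ℕ} {N : Type*} [AddCommGroup N] [Module ℂ N]
    (f g : A ⊗[ℂ] A →ₗ[ℂ] N)
    (h : ∀ a ∈ Mon x y i, ∀ b ∈ Mon x y j, f (a ⊗ₜ b) = g (a ⊗ₜ b)) :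
    ∀ t ∈ S x y i j, f t = g t := by
  intro t ht
  have h2 : S x y i j ≤ LinearMap.ker (f - g) := by
    apply Submodule.span_le.mpr
    rintro _ ⟨a, ha, b, hb, rfl⟩
    simp [LinearMap.mem_ker, sub_eq_zero, h a ha b hb]
  have := h2 ht
  rwa [LinearMap.mem_ker, LinearMap.sub_apply, sub_eq_zero] at this

/-- `z ↦ μ(assoc⁻¹(u ⊗ z))` -/
def Ku (u : A) : A ⊗[ℂ] A →ₗ[ℂ] A ⊗[ℂ] A :=
  LinearMap.rTensor A (LinearMap.mul' ℂ A) ∘ₗ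
    (TensorProduct.assoc ℂ A A A).symm.toLinearMap ∘ₗ TensorProduct.mk ℂ A (A ⊗[ℂ] A) u

@[simp] lemma Ku_tmul (u w₁ w₂ : A) : Ku u (w₁ ⊗ₜ w₂) = (u * w₁) ⊗ₜ w₂ := by
  simp [Ku]

def Kl (v : A) : A ⊗[ℂ] A →ₗ[ℂ] A ⊗[ℂ] A :=
  LinearMap.lTensor A (LinearMap.mul' ℂ A) ∘ₗ
    (TensorProduct.assoc ℂ A A A).toLinearMap ∘ₗ (TensorProduct.mk ℂ (A ⊗[ℂ] A) A).flip v

@[simp] lemma Kl_tmul (v w₁ w₂ : A) : Kl v (w₁ ⊗ₜ w₂) = w₁ ⊗ₜ (w₂ * v) := by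
  simp [Kl]

lemma mu_Ku (u : A) (z : A ⊗[ℂ] A) :
    LinearMap.mul' ℂ A (Ku u z) = u * LinearMap.mul' ℂ A z := by
  induction z using TensorProduct.induction_on with
  | zero => simp
  | tmul w₁ w₂ => simp [mul_assoc]
  | add z₁ z₂ h₁ h₂ => simp [map_add, h₁, h₂, mul_add]

lemma mu_Kl (v : A) (z : A ⊗[ℂ] A) :
    LinearMap.mul' ℂ A (Kl v z) = LinearMap.mul' ℂ A z * v := by
  induction z using TensorProduct.induction_on with
  | zero => simp
  | tmul w₁ w₂ => simp [mul_assoc]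
  | add z₁ z₂ h₁ h₂ => simp [map_add, h₁, h₂, add_mul]

def Hr (Ψ : A ⊗[ℂ] A →ₗ[ℂ] A ⊗[ℂ] A) (c : A) : A ⊗[ℂ] A →ₗ[ℂ] A ⊗[ℂ] A :=
  LinearMap.rTensor A (LinearMap.mul' ℂ A) ∘ₗ
    (TensorProduct.assoc ℂ A A A).symm.toLinearMap ∘ₗ
    LinearMap.lTensor A Ψ ∘ₗ
    (TensorProduct.assoc ℂ A A A).toLinearMap ∘ₗ (TensorProduct.mk ℂ (A ⊗[ℂ] A) A).flip c

lemma Hr_tmul (Ψ : A ⊗[ℂ] A →ₗ[ℂ] A ⊗[ℂ] A) (c u v : A) :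
    Hr Ψ c (u ⊗ₜ v) = Ku u (Ψ (v ⊗ₜ c)) := by
  simp [Hr, Ku]

def Hl (Ψ : A ⊗[ℂ] A →ₗ[ℂ] A ⊗[ℂ] A) (a : A) : A ⊗[ℂ] A →ₗ[ℂ] A ⊗[ℂ] A :=
  LinearMap.lTensor A (LinearMap.mul' ℂ A) ∘ₗ
    (TensorProduct.assoc ℂ A A A).toLinearMap ∘ₗ
    LinearMap.rTensor A Ψ ∘ₗ
    (TensorProduct.assoc ℂ A A A).symm.toLinearMap ∘ₗ TensorProduct.mk ℂ A (A ⊗[ℂ] A) a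

lemma Hl_tmul (Ψ : A ⊗[ℂ] A →ₗ[ℂ] A ⊗[ℂ] A) (a u v : A) :
    Hl Ψ a (u ⊗ₜ v) = Kl v (Ψ (a ⊗ₜ u)) := by
  simp [Hl, Kl]

end S7Aux

open S7Aux

/-- In the quantum plane `A = ℂ⟨x,y⟩/(yx - qxy)` (`q` not a root of
unity, `s = q^{1/2}`), any ribbon automorphism `σ` with `σ(x) = λ x`, `σ(y) = λ y`
(satisfying the ribbon relation `σ ∘ μ = μ ∘ (σ ⊗ σ) ∘ Ψ²` for the braiding `Ψ` induced
from `ℂ_q[SL(2)]`) satisfies `σ(x^m y^n) = λ^{m+n} q^{(m+n)(m+n-1)/2} x^m y^n`.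
The braiding `Ψ` is specified by its values on the generators, the unit laws, and the
two hexagon identities expressing compatibility with multiplication. -/
theorem stmt7 {A : Type*} [Ring A] [Algebra ℂ A] (q s lam : ℂ)
    (hq : q ≠ 0) (hroot : ∀ n : ℕ, n ≠ 0 → q ^ n ≠ 1) (hs : s ^ 2 = q) (hs0 : s ≠ 0)
    (hlam : lam ≠ 0)
    (x y : A) (hrel : y * x = q • (x * y))
    (Bas : Module.Basis (ℕ × ℕ) ℂ A) (hBas : ∀ m n : ℕ, Bas (m, n) = x ^ m * y ^ n)
    (Ψ : A ⊗[ℂ] A →ₗ[ℂ] A ⊗[ℂ] A)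
    -- values of the braiding on the generators
    (hxx : Ψ (x ⊗ₜ x) = s • (x ⊗ₜ x))
    (hxy : Ψ (x ⊗ₜ y) = s⁻¹ • (y ⊗ₜ x))
    (hyx : Ψ (y ⊗ₜ x) = s⁻¹ • (x ⊗ₜ y) + (s⁻¹ * (q - q⁻¹)) • (y ⊗ₜ x))
    (hyy : Ψ (y ⊗ₜ y) = s • (y ⊗ₜ y))
    -- unit laws for the braiding
    (hunitl : ∀ a : A, Ψ ((1 : A) ⊗ₜ a) = a ⊗ₜ (1 : A))
    (hunitr : ∀ a : A, Ψ (a ⊗ₜ (1 : A)) = (1 : A) ⊗ₜ a)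
    -- hexagon identities: compatibility of `Ψ` with the multiplication
    (hhex1 : Ψ ∘ₗ (LinearMap.rTensor A (LinearMap.mul' ℂ A) ∘ₗ
        (TensorProduct.assoc ℂ A A A).symm.toLinearMap) =
      LinearMap.lTensor A (LinearMap.mul' ℂ A) ∘ₗ
        ((TensorProduct.assoc ℂ A A A).toLinearMap ∘ₗ
          LinearMap.rTensor A Ψ ∘ₗ (TensorProduct.assoc ℂ A A A).symm.toLinearMap) ∘ₗ
        LinearMap.lTensor A Ψ)
    (hhex2 : Ψ ∘ₗ LinearMap.lTensor A (LinearMap.mul' ℂ A) =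
      (LinearMap.rTensor A (LinearMap.mul' ℂ A) ∘ₗ
        (TensorProduct.assoc ℂ A A A).symm.toLinearMap) ∘ₗ
        LinearMap.lTensor A Ψ ∘ₗ
        ((TensorProduct.assoc ℂ A A A).toLinearMap ∘ₗ
          LinearMap.rTensor A Ψ ∘ₗ (TensorProduct.assoc ℂ A A A).symm.toLinearMap))
    (σ : A →ₗ[ℂ] A) (hbij : Function.Bijective σ)
    (hσ1 : σ 1 = 1) (hσx : σ x = lam • x) (hσy : σ y = lam • y)
    -- the ribbon relation `σ ∘ μ = μ ∘ (σ ⊗ σ) ∘ Ψ²`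
    (hribbon : σ ∘ₗ LinearMap.mul' ℂ A =
      LinearMap.mul' ℂ A ∘ₗ TensorProduct.map σ σ ∘ₗ Ψ ∘ₗ Ψ) :
    ∀ m n : ℕ, σ (x ^ m * y ^ n) =
      (lam ^ (m + n) * s ^ ((m + n) * (m + n - 1))) • (x ^ m * y ^ n) := by
  classical
  -- basic monomial facts
  have hx1 : x ∈ Mon x y 1 := ⟨1, 0, rfl, by simp⟩
  have hy1 : y ∈ Mon x y 1 := ⟨0, 1, rfl, by simp⟩
  have h10 : (1 : A) ∈ Mon x y 0 := ⟨0, 0, rfl, by simp⟩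
  have mon1 : ∀ a ∈ Mon x y 1, a = x ∨ a = y := by
    rintro a ⟨p, r, hpr, rfl⟩
    rcases p with _ | p
    · right; have : r = 1 := by omega
      subst this; simp
    · left; have hp : p = 0 := by omega
      have hr : r = 0 := by omega
      subst hp; subst hr; simp
  have commYX : ∀ u : ℕ, y * x ^ u = (q ^ u) • (x ^ u * y) := by
    intro u
    induction u with
    | zero => simp
    | succ u ih =>
      rw [pow_succ, ← mul_assoc, ih]
      rw [smul_mul_assoc, mul_assoc, hrel, mul_smul_comm, pow_succ, smul_smul]
      ring_nf
      rw [mul_assoc]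
  have commPow : ∀ r u : ℕ, y ^ r * x ^ u = (q ^ (r * u)) • (x ^ u * y ^ r) := by
    intro r u
    induction r with
    | zero => simp
    | succ r ih =>
      rw [pow_succ, mul_assoc, commYX, mul_smul_comm, ← mul_assoc, ih, smul_mul_assoc,
        smul_smul, ← pow_add]
      have he : u + r * u = (r + 1) * u := by ring
      rw [he, mul_assoc]
  have monMul : ∀ (i j : ℕ), ∀ a ∈ Mon x y i, ∀ b ∈ Mon x y j,
      ∃ (c : ℂ) (m : A), m ∈ Mon x y (i + j) ∧ a * b = c • m := by
    rintro i j a ⟨p, r, hpr, rfl⟩ b ⟨u, v, huv, rfl⟩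
    refine ⟨q ^ (r * u), x ^ (p + u) * y ^ (r + v), ⟨p + u, r + v, by omega, rfl⟩, ?_⟩
    calc x ^ p * y ^ r * (x ^ u * y ^ v)
        = x ^ p * (y ^ r * x ^ u) * y ^ v := by rw [mul_assoc, mul_assoc, mul_assoc]
      _ = (q ^ (r * u)) • (x ^ p * (x ^ u * y ^ r) * y ^ v) := by
          rw [commPow]; rw [mul_smul_comm, smul_mul_assoc]
      _ = (q ^ (r * u)) • (x ^ (p + u) * y ^ (r + v)) := by
          simp only [pow_add, mul_assoc]
  -- pointwise hexagons
  have hex2' : ∀ a b c : A, Ψ (a ⊗ₜ (b * c)) = Hr Ψ c (Ψ (a ⊗ₜ b)) := by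
    intro a b c
    have h := LinearMap.congr_fun hhex2 (a ⊗ₜ[ℂ] (b ⊗ₜ[ℂ] c))
    simpa [Hr, LinearMap.comp_apply] using h
  have hex1' : ∀ a b c : A, Ψ ((a * b) ⊗ₜ c) = Hl Ψ a (Ψ (b ⊗ₜ c)) := by
    intro a b c
    have h := LinearMap.congr_fun hhex1 (a ⊗ₜ[ℂ] (b ⊗ₜ[ℂ] c))
    simpa [Hl, LinearMap.comp_apply] using h
  
  -- splitting a degree d+1 monomial
  have monSplit : ∀ (d : ℕ), ∀ a ∈ Mon x y (d + 1),
      ∃ g ∈ Mon x y 1, ∃ a₂ ∈ Mon x y d, a = g * a₂ := by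
    rintro d a ⟨p, r, hpr, rfl⟩
    rcases p with _ | p'
    · refine ⟨y, hy1, x ^ 0 * y ^ (r - 1), ⟨0, r - 1, by omega, rfl⟩, ?_⟩
      have hr : r = (r - 1) + 1 := by omega
      simp only [pow_zero, one_mul]
      conv_lhs => rw [hr]
      rw [pow_succ']
    · refine ⟨x, hx1, x ^ p' * y ^ r, ⟨p', r, by omega, rfl⟩, ?_⟩
      rw [← mul_assoc, ← pow_succ']
  -- base case of the braiding computation
  have base : ∀ a ∈ Mon x y 1, ∀ b ∈ Mon x y 1,
      Ψ (a ⊗ₜ b) ∈ S x y 1 1 ∧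
        LinearMap.mul' ℂ A (Ψ (a ⊗ₜ b)) = s ^ (1 * 1) • (a * b) := by
    intro a ha b hb
    have h11 : s ^ (1 * 1) = s := by norm_num
    rw [h11]
    rcases mon1 a ha with rfl | rfl <;> rcases mon1 b hb with rfl | rfl
    · rw [hxx]
      exact ⟨Submodule.smul_mem _ _ (tmul_mem hx1 hx1), by simp⟩
    · rw [hxy]
      refine ⟨Submodule.smul_mem _ _ (tmul_mem hy1 hx1), ?_⟩
      rw [map_smul, LinearMap.mul'_apply, hrel, smul_smul]
      have hc : s⁻¹ * q = s := by
        rw [← hs]; field_simp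
      rw [hc]
    · rw [hyx]
      refine ⟨add_mem (Submodule.smul_mem _ _ (tmul_mem hx1 hy1))
        (Submodule.smul_mem _ _ (tmul_mem hy1 hx1)), ?_⟩
      rw [map_add, map_smul, map_smul, LinearMap.mul'_apply, LinearMap.mul'_apply,
        hrel, smul_smul, smul_smul, ← add_smul]
      have hc : s⁻¹ + s⁻¹ * (q - q⁻¹) * q = s * q := by
        rw [← hs]; field_simp; ring
      rw [hc, ← smul_smul]
    · rw [hyy]
      exact ⟨Submodule.smul_mem _ _ (tmul_mem hy1 hy1), by simp⟩
  -- the main induction: braiding preserves bidegree and `μ ∘ Ψ` acts by `s^{ij}`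
  have main : ∀ n : ℕ, ∀ i j, i + j = n → ∀ a ∈ Mon x y i, ∀ b ∈ Mon x y j,
      Ψ (a ⊗ₜ b) ∈ S x y j i ∧
        LinearMap.mul' ℂ A (Ψ (a ⊗ₜ b)) = s ^ (i * j) • (a * b) := by
    intro n
    induction n using Nat.strong_induction_on with
    | _ n ih =>
    intro i j hn a ha b hb
    rcases Nat.eq_zero_or_pos i with hi0 | hi0
    · subst hi0
      obtain ⟨p, r, hpr, rfl⟩ := ha
      have hp : p = 0 := by omega
      have hr : r = 0 := by omega
      subst hp; subst hr
      have h1 : (x : A) ^ 0 * y ^ 0 = 1 := by simp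
      rw [h1, hunitl]
      exact ⟨tmul_mem hb h10, by simp⟩
    rcases Nat.eq_zero_or_pos j with hj0 | hj0
    · subst hj0
      obtain ⟨u, v, huv, rfl⟩ := hb
      have hu : u = 0 := by omega
      have hv : v = 0 := by omega
      subst hu; subst hv
      have h1 : (x : A) ^ 0 * y ^ 0 = 1 := by simp
      rw [h1, hunitr]
      exact ⟨tmul_mem h10 ha, by simp⟩
    by_cases hj2 : 2 ≤ j
    · -- split b = g * b₂ and use the second hexagon
      obtain ⟨j', rfl⟩ : ∃ j', j = j' + 1 := ⟨j - 1, by omega⟩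
      obtain ⟨g, hg, b₂, hb₂, hbe⟩ := monSplit j' b hb
      rw [hbe, hex2']
      have hΨag : Ψ (a ⊗ₜ g) ∈ S x y 1 i := (ih (i + 1) (by omega) i 1 rfl a ha g hg).1
      constructor
      · refine spanMem (Hr Ψ b₂) (S x y (j' + 1) i) ?_ _ hΨag
        intro u₁ hu₁ v₁ hv₁
        rw [Hr_tmul]
        have hΨvb : Ψ (v₁ ⊗ₜ b₂) ∈ S x y j' i :=
          (ih (i + j') (by omega) i j' rfl v₁ hv₁ b₂ hb₂).1
        refine spanMem (Ku u₁) (S x y (j' + 1) i) ?_ _ hΨvb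
        intro w₁ hw₁ w₂ hw₂
        rw [Ku_tmul]
        obtain ⟨c, m, hm, hmul⟩ := monMul 1 j' u₁ hu₁ w₁ hw₁
        rw [hmul, ← TensorProduct.smul_tmul']
        exact Submodule.smul_mem _ _ (tmul_mem (by rwa [Nat.add_comm] at hm) hw₂)
      · have key : ∀ t ∈ S x y 1 i,
            (LinearMap.mul' ℂ A ∘ₗ Hr Ψ b₂) t =
              ((s ^ (i * j')) • (LinearMap.mulRight ℂ b₂ ∘ₗ LinearMap.mul' ℂ A)) t := by
          refine spanPred _ _ ?_
          intro u₁ hu₁ v₁ hv₁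
          have hR : LinearMap.mul' ℂ A (Ψ (v₁ ⊗ₜ b₂)) = s ^ (i * j') • (v₁ * b₂) :=
            (ih (i + j') (by omega) i j' rfl v₁ hv₁ b₂ hb₂).2
          simp only [LinearMap.comp_apply, LinearMap.smul_apply, Hr_tmul,
            LinearMap.mulRight_apply, LinearMap.mul'_apply]
          rw [mu_Ku, hR, mul_smul_comm, mul_assoc]
        have hkey := key _ hΨag
        simp only [LinearMap.comp_apply, LinearMap.smul_apply,
          LinearMap.mulRight_apply, LinearMap.mul'_apply] at hkey
        rw [hkey]
        have hR2 : LinearMap.mul' ℂ A (Ψ (a ⊗ₜ g)) = s ^ (i * 1) • (a * g) :=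
          (ih (i + 1) (by omega) i 1 rfl a ha g hg).2
        rw [hR2, smul_mul_assoc, smul_smul, ← pow_add]
        have he : i * j' + i * 1 = i * (j' + 1) := by ring
        rw [he, mul_assoc]
    · have hj1 : j = 1 := by omega
      subst hj1
      by_cases hi2 : 2 ≤ i
      · -- split a = g * a₂ and use the first hexagon
        obtain ⟨i', rfl⟩ : ∃ i', i = i' + 1 := ⟨i - 1, by omega⟩
        obtain ⟨g, hg, a₂, ha₂, hae⟩ := monSplit i' a ha
        rw [hae, hex1']
        have hΨab : Ψ (a₂ ⊗ₜ b) ∈ S x y 1 i' :=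
          (ih (i' + 1) (by omega) i' 1 rfl a₂ ha₂ b hb).1
        constructor
        · refine spanMem (Hl Ψ g) (S x y 1 (i' + 1)) ?_ _ hΨab
          intro u₁ hu₁ v₁ hv₁
          rw [Hl_tmul]
          have hΨgu : Ψ (g ⊗ₜ u₁) ∈ S x y 1 1 :=
            (ih 2 (by omega) 1 1 rfl g hg u₁ hu₁).1
          refine spanMem (Kl v₁) (S x y 1 (i' + 1)) ?_ _ hΨgu
          intro w₁ hw₁ w₂ hw₂
          rw [Kl_tmul]
          obtain ⟨c, m, hm, hmul⟩ := monMul 1 i' w₂ hw₂ v₁ hv₁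
          rw [hmul, TensorProduct.tmul_smul]
          exact Submodule.smul_mem _ _ (tmul_mem hw₁ (by rwa [Nat.add_comm] at hm))
        · have key : ∀ t ∈ S x y 1 i',
              (LinearMap.mul' ℂ A ∘ₗ Hl Ψ g) t =
                (s • (LinearMap.mulLeft ℂ g ∘ₗ LinearMap.mul' ℂ A)) t := by
            refine spanPred _ _ ?_
            intro u₁ hu₁ v₁ hv₁
            have hR : LinearMap.mul' ℂ A (Ψ (g ⊗ₜ u₁)) = s ^ (1 * 1) • (g * u₁) :=
              (ih 2 (by omega) 1 1 rfl g hg u₁ hu₁).2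
            simp only [LinearMap.comp_apply, LinearMap.smul_apply, Hl_tmul,
              LinearMap.mulLeft_apply, LinearMap.mul'_apply]
            rw [mu_Kl, hR]
            simp only [one_mul, pow_one]
            rw [smul_mul_assoc, mul_assoc]
          have hkey := key _ hΨab
          simp only [LinearMap.comp_apply, LinearMap.smul_apply,
            LinearMap.mulLeft_apply, LinearMap.mul'_apply] at hkey
          rw [hkey]
          have hR2 : LinearMap.mul' ℂ A (Ψ (a₂ ⊗ₜ b)) = s ^ (i' * 1) • (a₂ * b) :=
            (ih (i' + 1) (by omega) i' 1 rfl a₂ ha₂ b hb).2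
          rw [hR2, mul_smul_comm, smul_smul]
          have he : s * s ^ (i' * 1) = s ^ ((i' + 1) * 1) := by
            rw [Nat.mul_one, Nat.mul_one, pow_succ']
          rw [he, mul_assoc]
      · have hi1 : i = 1 := by omega
        subst hi1
        exact base a ha b hb
  -- the ribbon automorphism acts by a scalar on each total degree
  have sdeg : ∀ d : ℕ, ∀ a ∈ Mon x y d, σ a = (lam ^ d * s ^ (d * (d - 1))) • a := by
    intro d
    induction d with
    | zero =>
      rintro a ⟨p, r, hpr, rfl⟩
      have hp : p = 0 := by omega
      have hr : r = 0 := by omega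
      subst hp; subst hr
      simpa using hσ1
    | succ d ihd =>
      intro a ha
      obtain ⟨g, hg, a₂, ha₂, hae⟩ := monSplit d a ha
      rw [hae]
      have hrib := LinearMap.congr_fun hribbon (g ⊗ₜ[ℂ] a₂)
      simp only [LinearMap.comp_apply, LinearMap.mul'_apply] at hrib
      rw [hrib]
      have h1 : Ψ (g ⊗ₜ a₂) ∈ S x y d 1 := (main (1 + d) 1 d rfl g hg a₂ ha₂).1
      have h2 : Ψ (Ψ (g ⊗ₜ a₂)) ∈ S x y 1 d :=
        spanMem Ψ (S x y 1 d)
          (fun a' ha' b' hb' => (main (d + 1) d 1 rfl a' ha' b' hb').1) _ h1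
      have key : ∀ t ∈ S x y 1 d,
          (LinearMap.mul' ℂ A ∘ₗ TensorProduct.map σ σ) t =
            ((lam * (lam ^ d * s ^ (d * (d - 1)))) • LinearMap.mul' ℂ A) t := by
        refine spanPred _ _ ?_
        intro u₁ hu₁ v₁ hv₁
        have hσu : σ u₁ = lam • u₁ := by
          rcases mon1 u₁ hu₁ with rfl | rfl
          · exact hσx
          · exact hσy
        have hσv : σ v₁ = (lam ^ d * s ^ (d * (d - 1))) • v₁ := ihd v₁ hv₁
        simp only [LinearMap.comp_apply, LinearMap.smul_apply, TensorProduct.map_tmul,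
          LinearMap.mul'_apply, hσu, hσv]
        rw [smul_mul_assoc, mul_smul_comm, smul_smul]
      have hkey := key _ h2
      simp only [LinearMap.comp_apply, LinearMap.smul_apply, LinearMap.mul'_apply] at hkey
      rw [hkey]
      have hm1 : ∀ t ∈ S x y d 1,
          (LinearMap.mul' ℂ A ∘ₗ Ψ) t = ((s ^ (d * 1)) • LinearMap.mul' ℂ A) t := by
        refine spanPred _ _ ?_
        intro a' ha' b' hb'
        simp only [LinearMap.comp_apply, LinearMap.smul_apply, LinearMap.mul'_apply]
        exact (main (d + 1) d 1 rfl a' ha' b' hb').2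
      have hm1' := hm1 _ h1
      simp only [LinearMap.comp_apply, LinearMap.smul_apply, LinearMap.mul'_apply] at hm1'
      rw [hm1']
      have hm2 : LinearMap.mul' ℂ A (Ψ (g ⊗ₜ a₂)) = s ^ (1 * d) • (g * a₂) :=
        (main (1 + d) 1 d rfl g hg a₂ ha₂).2
      rw [hm2, smul_smul, smul_smul]
      congr 1
      have hexp : d * (d - 1) + (d * 1 + 1 * d) = (d + 1) * (d + 1 - 1) := by
        cases d with
        | zero => norm_num
        | succ k => simp [Nat.succ_sub_one]; ring
      rw [← hexp]
      rw [pow_add, pow_add]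
      ring
  intro m n
  exact sdeg (m + n) _ ⟨m, n, rfl, rfl⟩
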